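/- Let u(p), u(q), u(r) be positive hyperreals with u(p) ≻ u(q) and such that u(r)/u(p) is finite. Then for every standard λ ∈ (0,1), λ·u(p) + (1-λ)·u(r) ≻ λ·u(q) + (1-λ)·u(r). (Qualitative independence in the non-overriding case.) -/
import Mathlib


open Hyperreal

/-- `x` is qualitatively larger than `y`. -/
def QGT (x y : ℝ*) : Prop := ∃ r : ℝ, 0 < r ∧ (r : ℝ*) ≤ (x - y) / x

/-- qualitative indifference -/
def QSIM (x y : ℝ*) : Prop := ¬ QGT x y ∧ ¬ QGT y x

theorem stmt17 (up uq ur : ℝ*) (hp : 0 < up) (hq : 0 < uq) (hr : 0 < ur)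
    (h : QGT up uq) (hfin : ¬ Infinite (ur / up)) :
    ∀ l : ℝ, 0 < l → l < 1 →
      QGT ((l : ℝ*) * up + ((1 : ℝ*) - (l : ℝ*)) * ur)
          ((l : ℝ*) * uq + ((1 : ℝ*) - (l : ℝ*)) * ur) := by
  obtain ⟨r, hr0, hrle⟩ := h
  rw [Hyperreal.not_infinite_iff_exist_lt_gt] at hfin
  obtain ⟨a, C, -, hC⟩ := hfin
  intro l hl0 hl1
  have hCpos : (0:ℝ*) < (C:ℝ*) := lt_trans (div_pos hr hp) hC
  have hC0 : (0:ℝ) < C := by exact_mod_cast hCpos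
  have hur : ur < (C:ℝ*) * up := by rwa [div_lt_iff₀ hp] at hC
  have hpq : (r:ℝ*) * up ≤ up - uq := by rwa [le_div_iff₀ hp] at hrle
  have hden : (0:ℝ) < l + (1-l)*C := by nlinarith
  refine ⟨l * r / (l + (1-l)*C), by positivity, ?_⟩
  have hl0' : (0:ℝ*) < (l:ℝ*) := by exact_mod_cast hl0
  have hl1' : (l:ℝ*) < 1 := by exact_mod_cast hl1
  have hr0' : (0:ℝ*) < (r:ℝ*) := by exact_mod_cast hr0
  have hx : (0:ℝ*) < (l:ℝ*)*up + ((1:ℝ*)-(l:ℝ*))*ur := by nlinarith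
  rw [le_div_iff₀ hx]
  have hden' : (0:ℝ*) < (l:ℝ*) + (1-(l:ℝ*))*(C:ℝ*) := by exact_mod_cast hden
  push_cast
  rw [div_mul_eq_mul_div, div_le_iff₀ hden']
  have h1 : ((1:ℝ*)-(l:ℝ*))*ur ≤ ((1:ℝ*)-(l:ℝ*))*((C:ℝ*)*up) :=
    mul_le_mul_of_nonneg_left hur.le (by linarith)
  have h2 : (l:ℝ*)*((r:ℝ*)*up) ≤ (l:ℝ*)*(up-uq) :=
    mul_le_mul_of_nonneg_left hpq hl0'.le
  nlinarith [mul_le_mul_of_nonneg_left h1 (mul_pos hl0' hr0').le,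
    mul_le_mul_of_nonneg_right h2 hden'.le, mul_pos hl0' hr0']
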